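/- Let G be a (P3 ∪ P2, house)-free graph such that every proper induced subgraph G' of G satisfies χ(G') ≤ 2ω(G'), while χ(G) > 2ω(G), and suppose v1, v2, v3, v4 induce a 2K2 in G with edges v1v2 and v3v4. Let A be the set of vertices outside {v1,v2,v3,v4} with no neighbor in {v1,v2,v3,v4}, and suppose N_{{1,2,3,4}} is a nonempty clique and A ≠ ∅. If some vertex x ∈ N_{{1,2}} is not adjacent to all vertices of N_{{1,2,3,4}}, then there exists a vertex y ∈ N_{{3,4}} adjacent to x that is not adjacent to all vertices of N_{{1,2,3,4}}, and moreover |A| = 1. -/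

import Mathlib

open SimpleGraph

/-- The disjoint union of a path on 3 vertices and a path on 2 vertices,
with edges `01`, `12` and `34`. -/
def P3uP2 : SimpleGraph (Fin 5) :=
  SimpleGraph.fromEdgeSet {s(0, 1), s(1, 2), s(3, 4)}

/-- The house graph: the complement of the path on 5 vertices. -/
def house : SimpleGraph (Fin 5) := (SimpleGraph.pathGraph 5)ᶜ

/-- `G` has no induced subgraph isomorphic to `H`. -/
def IsInducedFree {V : Type*} {W : Type*} (G : SimpleGraph V) (H : SimpleGraph W) : Prop :=
  IsEmpty (H ↪g G)

/-- The four distinct vertices `v 0, v 1, v 2, v 3` induce a `2K₂` in `G`,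
with edges `v 0 — v 1` and `v 2 — v 3` (here `v 0, v 1, v 2, v 3` play the roles of
`v₁, v₂, v₃, v₄`). -/
def Induces2K2 {V : Type*} (G : SimpleGraph V) (v : Fin 4 → V) : Prop :=
  Function.Injective v ∧ G.Adj (v 0) (v 1) ∧ G.Adj (v 2) (v 3) ∧
  ¬ G.Adj (v 0) (v 2) ∧ ¬ G.Adj (v 0) (v 3) ∧ ¬ G.Adj (v 1) (v 2) ∧ ¬ G.Adj (v 1) (v 3)

/-- `NS G v S` is the set of vertices outside `{v 0, v 1, v 2, v 3}` that are adjacent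
to `v i` exactly for the indices `i ∈ S`. -/
def NS {V : Type*} (G : SimpleGraph V) (v : Fin 4 → V) (S : Finset (Fin 4)) : Set V :=
  {u | (∀ i, u ≠ v i) ∧ ∀ i, G.Adj u (v i) ↔ i ∈ S}

/-- `X` is anticomplete to `Y`: there is no edge between `X` and `Y`. -/
def Anticomplete {V : Type*} (G : SimpleGraph V) (X Y : Set V) : Prop :=
  ∀ x ∈ X, ∀ y ∈ Y, ¬ G.Adj x y

/-- `X` is complete to `Y`: every vertex of `X` is adjacent to every vertex of `Y`. -/
def CompleteTo {V : Type*} (G : SimpleGraph V) (X Y : Set V) : Prop :=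
  ∀ x ∈ X, ∀ y ∈ Y, G.Adj x y

lemma P3uP2_adj {i j : Fin 5} : P3uP2.Adj i j ↔
    ((i=0∧j=1)∨(i=1∧j=0)∨(i=1∧j=2)∨(i=2∧j=1)∨(i=3∧j=4)∨(i=4∧j=3)) := by
  fin_cases i <;> fin_cases j <;> simp [P3uP2, Sym2.eq_iff]

lemma house_adj {i j : Fin 5} : house.Adj i j ↔
    ((i=0∧j=2)∨(i=2∧j=0)∨(i=0∧j=3)∨(i=3∧j=0)∨(i=0∧j=4)∨(i=4∧j=0)∨
     (i=1∧j=3)∨(i=3∧j=1)∨(i=1∧j=4)∨(i=4∧j=1)∨(i=2∧j=4)∨(i=4∧j=2)) := by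
  fin_cases i <;> fin_cases j <;> simp [house, SimpleGraph.pathGraph_adj] <;> decide

/-- An induced path `w0-w1-w2` together with an edge `w3-w4` anticomplete to it
yields an induced `P3 ∪ P2`, contradicting `P3uP2`-freeness. -/
lemma p3p2_free {V : Type*} {G : SimpleGraph V} (h1 : IsInducedFree G P3uP2)
    {w0 w1 w2 w3 w4 : V}
    (a01 : G.Adj w0 w1) (a12 : G.Adj w1 w2) (a34 : G.Adj w3 w4)
    (n02 : ¬ G.Adj w0 w2) (n03 : ¬ G.Adj w0 w3) (n04 : ¬ G.Adj w0 w4)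
    (n13 : ¬ G.Adj w1 w3) (n14 : ¬ G.Adj w1 w4)
    (n23 : ¬ G.Adj w2 w3) (n24 : ¬ G.Adj w2 w4)
    (e02 : w0 ≠ w2) (e03 : w0 ≠ w3) (e04 : w0 ≠ w4)
    (e13 : w1 ≠ w3) (e14 : w1 ≠ w4) (e23 : w2 ≠ w3) (e24 : w2 ≠ w4) : False := by
  have e01 := a01.ne; have e12 := a12.ne; have e34 := a34.ne
  have a10 := a01.symm; have a21 := a12.symm; have a43 := a34.symm
  have n20 : ¬ G.Adj w2 w0 := fun h => n02 h.symm
  have n30 : ¬ G.Adj w3 w0 := fun h => n03 h.symm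
  have n40 : ¬ G.Adj w4 w0 := fun h => n04 h.symm
  have n31 : ¬ G.Adj w3 w1 := fun h => n13 h.symm
  have n41 : ¬ G.Adj w4 w1 := fun h => n14 h.symm
  have n32 : ¬ G.Adj w3 w2 := fun h => n23 h.symm
  have n42 : ¬ G.Adj w4 w2 := fun h => n24 h.symm
  apply h1.false
  refine ⟨⟨![w0,w1,w2,w3,w4], ?_⟩, ?_⟩
  · intro i j hij
    fin_cases i <;> fin_cases j <;> simp_all
  · intro i j
    show G.Adj (![w0,w1,w2,w3,w4] i) (![w0,w1,w2,w3,w4] j) ↔ P3uP2.Adj i j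
    fin_cases i <;> fin_cases j <;> simp_all [P3uP2_adj]

/-- An induced square `a-b-c-d-a` with a roof `e` adjacent exactly to `a` and `d`
yields an induced house, contradicting house-freeness. -/
lemma house_free {V : Type*} {G : SimpleGraph V} (h2 : IsInducedFree G house)
    {a b c d e : V}
    (hab : G.Adj a b) (hbc : G.Adj b c) (hcd : G.Adj c d) (hda : G.Adj d a)
    (hea : G.Adj e a) (hed : G.Adj e d)
    (nac : ¬ G.Adj a c) (nbd : ¬ G.Adj b d) (neb : ¬ G.Adj e b) (nec : ¬ G.Adj e c)
    (eac : a ≠ c) (ebd : b ≠ d) (eeb : e ≠ b) (eec : e ≠ c) : False := by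
  have eab := hab.ne; have ebc := hbc.ne; have ecd := hcd.ne
  have eda := hda.ne; have eea := hea.ne; have eed := hed.ne
  have hba := hab.symm; have hcb := hbc.symm; have hdc := hcd.symm
  have had := hda.symm; have hae := hea.symm; have hde := hed.symm
  have nca : ¬ G.Adj c a := fun h => nac h.symm
  have ndb : ¬ G.Adj d b := fun h => nbd h.symm
  have nbe : ¬ G.Adj b e := fun h => neb h.symm
  have nce : ¬ G.Adj c e := fun h => nec h.symm
  apply h2.false
  refine ⟨⟨![a,c,e,b,d], ?_⟩, ?_⟩
  · intro i j hij
    fin_cases i <;> fin_cases j <;> simp_all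
  · intro i j
    show G.Adj (![a,c,e,b,d] i) (![a,c,e,b,d] j) ↔ house.Adj i j
    fin_cases i <;> fin_cases j <;> simp_all [house_adj]

/-- In a minimal counterexample to `χ ≤ 2ω`, no vertex is dominated by a
(necessarily nonadjacent) other vertex. -/
lemma no_dominated {V : Type*} [Fintype V] (G : SimpleGraph V)
    (hmin : ∀ s : Set V, s ≠ Set.univ →
      (G.induce s).chromaticNumber ≤ 2 * ((G.induce s).cliqueNum : ℕ∞))
    (hG : 2 * (G.cliqueNum : ℕ∞) < G.chromaticNumber)
    {a z : V} (hne : a ≠ z)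
    (hdom : ∀ w, G.Adj a w → G.Adj z w) : False := by
  classical
  set s : Set V := {a}ᶜ with hs
  have hsne : s ≠ Set.univ := by
    intro h
    have : a ∈ s := h ▸ Set.mem_univ a
    simp [hs] at this
  have hzs : z ∈ s := by simp [hs]; exact fun h => hne h.symm
  have hcol : ∀ n : ℕ, (G.induce s).Colorable n → G.Colorable n := by
    intro n ⟨C⟩
    refine ⟨Coloring.mk
      (fun w => if h : w = a then C ⟨z, hzs⟩ else C ⟨w, by simp [hs, h]⟩) ?_⟩
    intro p q hpq
    split_ifs with h1 h2 h2
    · exact absurd (h1 ▸ h2 ▸ hpq) (G.irrefl)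
    · have hzq : G.Adj z q := hdom q (h1 ▸ hpq)
      have : (G.induce s).Adj ⟨z, hzs⟩ ⟨q, by simp [hs, h2]⟩ := by simpa using hzq
      exact C.valid this
    · have hzp : G.Adj z p := hdom p (h2 ▸ hpq).symm
      have : (G.induce s).Adj ⟨p, by simp [hs, h1]⟩ ⟨z, hzs⟩ := by simpa using hzp.symm
      exact C.valid this
    · have : (G.induce s).Adj ⟨p, by simp [hs, h1]⟩ ⟨q, by simp [hs, h2]⟩ := by simpa using hpq
      exact C.valid this
  have hchain1 : G.chromaticNumber ≤ (G.induce s).chromaticNumber :=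
    chromaticNumber_le_of_forall_imp hcol
  haveI : Fintype ↥s := Fintype.ofFinite ↥s
  have hclq : ((G.induce s).cliqueNum : ℕ) ≤ G.cliqueNum := by
    obtain ⟨t, ht⟩ := (G.induce s).exists_isNClique_cliqueNum
    have hcl : G.IsClique (t.map (Function.Embedding.subtype _) : Finset V) := by
      intro p hp q hq hpq
      simp only [Finset.coe_map, Set.mem_image, Finset.mem_coe] at hp hq
      obtain ⟨p', hp', rfl⟩ := hp
      obtain ⟨q', hq', rfl⟩ := hq
      have hne' : p' ≠ q' := fun h => hpq (by rw [h])
      have := ht.1 hp' hq' hne'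
      simpa using this
    have hcard := IsClique.card_le_cliqueNum (tc := hcl)
    rwa [Finset.card_map, ht.2] at hcard
  have : G.chromaticNumber < G.chromaticNumber := by
    calc G.chromaticNumber ≤ (G.induce s).chromaticNumber := hchain1
      _ ≤ 2 * ((G.induce s).cliqueNum : ℕ∞) := hmin s hsne
      _ ≤ 2 * (G.cliqueNum : ℕ∞) := mul_le_mul_right (by exact_mod_cast hclq) 2
      _ < G.chromaticNumber := hG
  exact absurd this (lt_irrefl _)

theorem exists_bad_partner_in_N34_and_A_singleton
    {V : Type*} [Fintype V] (G : SimpleGraph V)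
    (h1 : IsInducedFree G P3uP2) (h2 : IsInducedFree G house)
    (hmin : ∀ s : Set V, s ≠ Set.univ →
      (G.induce s).chromaticNumber ≤ 2 * ((G.induce s).cliqueNum : ℕ∞))
    (hG : 2 * (G.cliqueNum : ℕ∞) < G.chromaticNumber)
    (v : Fin 4 → V) (h2k2 : Induces2K2 G v)
    (hcl : G.IsClique (NS G v {0, 1, 2, 3})) (hne : (NS G v {0, 1, 2, 3}).Nonempty)
    (hA : (NS G v ∅).Nonempty)
    (x : V) (hx : x ∈ NS G v {0, 1}) (hxnc : ¬ ∀ u ∈ NS G v {0, 1, 2, 3}, G.Adj x u) :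
    (∃ y ∈ NS G v {2, 3}, G.Adj x y ∧ ¬ ∀ u ∈ NS G v {0, 1, 2, 3}, G.Adj y u) ∧
    (NS G v ∅).ncard = 1 := by
  classical
  obtain ⟨vinj, a01, a23, g02, g03, g12, g13⟩ := h2k2
  have a10 := a01.symm
  have a32 := a23.symm
  have g20 : ¬ G.Adj (v 2) (v 0) := fun h => g02 h.symm
  have g30 : ¬ G.Adj (v 3) (v 0) := fun h => g03 h.symm
  have g21 : ¬ G.Adj (v 2) (v 1) := fun h => g12 h.symm
  have g31 : ¬ G.Adj (v 3) (v 1) := fun h => g13 h.symm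
  have vne01 : v 0 ≠ v 1 := fun h => absurd (vinj h) (by decide)
  have vne02 : v 0 ≠ v 2 := fun h => absurd (vinj h) (by decide)
  have vne03 : v 0 ≠ v 3 := fun h => absurd (vinj h) (by decide)
  have vne12 : v 1 ≠ v 2 := fun h => absurd (vinj h) (by decide)
  have vne13 : v 1 ≠ v 3 := fun h => absurd (vinj h) (by decide)
  have vne23 : v 2 ≠ v 3 := fun h => absurd (vinj h) (by decide)
  have hxv : ∀ i, x ≠ v i := hx.1
  have xa0 : G.Adj x (v 0) := (hx.2 0).mpr (by decide)
  have xa1 : G.Adj x (v 1) := (hx.2 1).mpr (by decide)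
  have xn2 : ¬ G.Adj x (v 2) := fun h => absurd ((hx.2 2).mp h) (by decide)
  have xn3 : ¬ G.Adj x (v 3) := fun h => absurd ((hx.2 3).mp h) (by decide)
  push_neg at hxnc
  obtain ⟨u, hu, hxu⟩ := hxnc
  have ua0 : G.Adj u (v 0) := (hu.2 0).mpr (by decide)
  have ua1 : G.Adj u (v 1) := (hu.2 1).mpr (by decide)
  have ua2 : G.Adj u (v 2) := (hu.2 2).mpr (by decide)
  have ua3 : G.Adj u (v 3) := (hu.2 3).mpr (by decide)
  have xneu : x ≠ u := fun h => xn2 (by rw [h]; exact ua2)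
  obtain ⟨a0, ha0⟩ := hA
  have Aadj : ∀ z ∈ NS G v ∅, ∀ i, ¬ G.Adj z (v i) :=
    fun z hz i h => absurd ((hz.2 i).mp h) (by simp)
  have memM : ∀ z, (∀ i, z ≠ v i) → G.Adj z (v 0) → G.Adj z (v 1) →
      G.Adj z (v 2) → G.Adj z (v 3) → z ∈ NS G v {0,1,2,3} := by
    intro z hzv c0 c1 c2 c3
    refine ⟨hzv, fun i => ⟨fun _ => ?_, fun _ => ?_⟩⟩
    · fin_cases i <;> decide
    · fin_cases i <;> assumption
  have memA : ∀ z, (∀ i, z ≠ v i) → ¬G.Adj z (v 0) → ¬G.Adj z (v 1) →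
      ¬G.Adj z (v 2) → ¬G.Adj z (v 3) → z ∈ NS G v ∅ := by
    intro z hzv c0 c1 c2 c3
    refine ⟨hzv, fun i => ⟨fun h => ?_, fun h => absurd h (by simp)⟩⟩
    fin_cases i
    · exact absurd h c0
    · exact absurd h c1
    · exact absurd h c2
    · exact absurd h c3
  have mem23 : ∀ z, (∀ i, z ≠ v i) → ¬G.Adj z (v 0) → ¬G.Adj z (v 1) →
      G.Adj z (v 2) → G.Adj z (v 3) → z ∈ NS G v {2,3} := by
    intro z hzv c0 c1 c2 c3
    refine ⟨hzv, fun i => ?_⟩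
    fin_cases i
    · exact ⟨fun h => absurd h c0, fun h => absurd h (by decide)⟩
    · exact ⟨fun h => absurd h c1, fun h => absurd h (by decide)⟩
    · exact ⟨fun _ => by decide, fun _ => c2⟩
    · exact ⟨fun _ => by decide, fun _ => c3⟩
  -- A is anticomplete to x
  have hAx : ∀ z ∈ NS G v ∅, ¬ G.Adj z x := by
    intro z hz h
    exact p3p2_free h1 h xa0 a23 (Aadj z hz 0) (Aadj z hz 2) (Aadj z hz 3)
      xn2 xn3 g02 g03 (hz.1 0) (hz.1 2) (hz.1 3) (hxv 2) (hxv 3) vne02 vne03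
  -- every vertex of A is adjacent to u
  have hAu : ∀ b ∈ NS G v ∅, G.Adj b u := by
    intro b hb
    by_contra hbu
    have hbv : ∀ i, ¬ G.Adj b (v i) := Aadj b hb
    refine no_dominated G hmin hG (a := b) (z := u)
      (fun h => hbv 0 (by rw [h]; exact ua0)) ?_
    intro w hw
    by_contra hnuw
    have hwv : ∀ i, w ≠ v i := fun i h => hbv i (by rw [← h]; exact hw)
    have hwnu : w ≠ u := fun h => hbu (by rw [← h]; exact hw)
    by_cases b0 : G.Adj w (v 0) <;> by_cases b1 : G.Adj w (v 1) <;>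
      by_cases b2 : G.Adj w (v 2) <;> by_cases b3 : G.Adj w (v 3)
    -- TTTT : w ∈ M, clique with u
    · exact hnuw ((hcl (memM w hwv b0 b1 b2 b3) hu hwnu).symm)
    -- TTTF : N123 : house (u, v0, w, v2, v3)
    · exact house_free h2 ua0 b0.symm b2 ua2.symm ua3.symm a32 hnuw g02 g30
        (fun h => b3 h.symm) hwnu.symm vne02 vne03.symm (hwv 3).symm
    -- TTFT : N124 : house (u, v0, w, v3, v2)
    · exact house_free h2 ua0 b0.symm b3 ua3.symm ua2.symm a23 hnuw g03 g20
        (fun h => b2 h.symm) hwnu.symm vne03 vne02.symm (hwv 2).symm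
    -- TTFF : N12 : P3 (b, w, v0) + P2 (v2, v3)
    · exact p3p2_free h1 hw b0 a23 (hbv 0) (hbv 2) (hbv 3) b2 b3 g02 g03
        (hb.1 0) (hb.1 2) (hb.1 3) (hwv 2) (hwv 3) vne02 vne03
    -- TFTT : house (u, v2, w, v0, v1)
    · exact house_free h2 ua2 b2.symm b0 ua0.symm ua1.symm a10 hnuw g20 g12
        (fun h => b1 h.symm) hwnu.symm vne02.symm vne12 (hwv 1).symm
    -- TFTF : house (u, v2, w, v0, v1)
    · exact house_free h2 ua2 b2.symm b0 ua0.symm ua1.symm a10 hnuw g20 g12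
        (fun h => b1 h.symm) hwnu.symm vne02.symm vne12 (hwv 1).symm
    -- TFFT : house (u, v3, w, v0, v1)
    · exact house_free h2 ua3 b3.symm b0 ua0.symm ua1.symm a10 hnuw g30 g13
        (fun h => b1 h.symm) hwnu.symm vne03.symm vne13 (hwv 1).symm
    -- TFFF : singleton 0 : P3 (w, v0, v1) + P2 (v2, v3)
    · exact p3p2_free h1 b0 a01 a23 b1 b2 b3 g02 g03 g12 g13
        (hwv 1) (hwv 2) (hwv 3) vne02 vne03 vne12 vne13
    -- FTTT : house (u, v2, w, v1, v0)
    · exact house_free h2 ua2 b2.symm b1 ua1.symm ua0.symm a01 hnuw g21 g02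
        (fun h => b0 h.symm) hwnu.symm vne12.symm vne02 (hwv 0).symm
    -- FTTF : house (u, v2, w, v1, v0)
    · exact house_free h2 ua2 b2.symm b1 ua1.symm ua0.symm a01 hnuw g21 g02
        (fun h => b0 h.symm) hwnu.symm vne12.symm vne02 (hwv 0).symm
    -- FTFT : house (u, v3, w, v1, v0)
    · exact house_free h2 ua3 b3.symm b1 ua1.symm ua0.symm a01 hnuw g31 g03
        (fun h => b0 h.symm) hwnu.symm vne13.symm vne03 (hwv 0).symm
    -- FTFF : singleton 1 : P3 (w, v1, v0) + P2 (v2, v3)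
    · exact p3p2_free h1 b1 a10 a23 b0 b2 b3 g12 g13 g02 g03
        (hwv 0) (hwv 2) (hwv 3) vne12 vne13 vne02 vne03
    -- FFTT : N34 : P3 (b, w, v2) + P2 (v0, v1)
    · exact p3p2_free h1 hw b2 a01 (hbv 2) (hbv 0) (hbv 1) b0 b1 g20 g21
        (hb.1 2) (hb.1 0) (hb.1 1) (hwv 0) (hwv 1) vne02.symm vne12.symm
    -- FFTF : singleton 2 : P3 (w, v2, v3) + P2 (v0, v1)
    · exact p3p2_free h1 b2 a23 a01 b3 b0 b1 g20 g21 g30 g31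
        (hwv 3) (hwv 0) (hwv 1) vne02.symm vne12.symm vne03.symm vne13.symm
    -- FFFT : singleton 3 : P3 (w, v3, v2) + P2 (v0, v1)
    · exact p3p2_free h1 b3 a32 a01 b2 b0 b1 g30 g31 g20 g21
        (hwv 2) (hwv 0) (hwv 1) vne03.symm vne13.symm vne02.symm vne12.symm
    -- FFFF : w ∈ A : P3 (x, v0, u) + P2 (b, w)
    · exact p3p2_free h1 xa0 ua0.symm hw hxu (fun h => hAx b hb h.symm)
        (fun h => hAx w (memA w hwv b0 b1 b2 b3) h.symm)
        (fun h => hbv 0 h.symm) (fun h => b0 h.symm)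
        (fun h => hbu h.symm) hnuw
        xneu (fun h => hbv 0 (by rw [← h]; exact xa0))
        (fun h => b0 (by rw [← h]; exact xa0))
        (hb.1 0).symm (hwv 0).symm
        (fun h => hbv 0 (by rw [← h]; exact ua0)) hwnu.symm
  -- x has a neighbour y in N_{3,4}
  have hyE : ∃ y, y ∈ NS G v {2,3} ∧ G.Adj x y := by
    by_contra hNy
    push_neg at hNy
    refine no_dominated G hmin hG (a := x) (z := u) xneu ?_
    intro w hw
    by_contra hnuw
    by_cases hwv0 : w = v 0
    · exact hnuw (by rw [hwv0]; exact ua0)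
    by_cases hwv1 : w = v 1
    · exact hnuw (by rw [hwv1]; exact ua1)
    have hwv2 : w ≠ v 2 := fun h => xn2 (by rw [← h]; exact hw)
    have hwv3 : w ≠ v 3 := fun h => xn3 (by rw [← h]; exact hw)
    have hwv : ∀ i, w ≠ v i := by
      intro i; fin_cases i
      · exact hwv0
      · exact hwv1
      · exact hwv2
      · exact hwv3
    have hwnu : w ≠ u := fun h => hxu (by rw [← h]; exact hw)
    by_cases b0 : G.Adj w (v 0) <;> by_cases b1 : G.Adj w (v 1) <;>
      by_cases b2 : G.Adj w (v 2) <;> by_cases b3 : G.Adj w (v 3)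
    -- TTTT
    · exact hnuw ((hcl (memM w hwv b0 b1 b2 b3) hu hwnu).symm)
    -- TTTF
    · exact house_free h2 ua0 b0.symm b2 ua2.symm ua3.symm a32 hnuw g02 g30
        (fun h => b3 h.symm) hwnu.symm vne02 vne03.symm (hwv 3).symm
    -- TTFT
    · exact house_free h2 ua0 b0.symm b3 ua3.symm ua2.symm a23 hnuw g03 g20
        (fun h => b2 h.symm) hwnu.symm vne03 vne02.symm (hwv 2).symm
    -- TTFF : N12-pattern : P3 (a0, u, v2) + P2 (w, x)
    · have naw : ¬ G.Adj a0 w := fun h =>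
        p3p2_free h1 h b0 a23 (Aadj a0 ha0 0) (Aadj a0 ha0 2) (Aadj a0 ha0 3) b2 b3 g02 g03
          (ha0.1 0) (ha0.1 2) (ha0.1 3) (hwv 2) (hwv 3) vne02 vne03
      exact p3p2_free h1 (hAu a0 ha0) ua2 hw.symm (Aadj a0 ha0 2) naw (hAx a0 ha0)
        hnuw (fun h => hxu h.symm) (fun h => b2 h.symm) (fun h => xn2 h.symm)
        (ha0.1 2) (fun h => Aadj a0 ha0 0 (by rw [h]; exact b0))
        (fun h => Aadj a0 ha0 0 (by rw [h]; exact xa0))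
        hwnu.symm xneu.symm (hwv 2).symm (hxv 2).symm
    -- TFTT
    · exact house_free h2 ua2 b2.symm b0 ua0.symm ua1.symm a10 hnuw g20 g12
        (fun h => b1 h.symm) hwnu.symm vne02.symm vne12 (hwv 1).symm
    -- TFTF
    · exact house_free h2 ua2 b2.symm b0 ua0.symm ua1.symm a10 hnuw g20 g12
        (fun h => b1 h.symm) hwnu.symm vne02.symm vne12 (hwv 1).symm
    -- TFFT
    · exact house_free h2 ua3 b3.symm b0 ua0.symm ua1.symm a10 hnuw g30 g13
        (fun h => b1 h.symm) hwnu.symm vne03.symm vne13 (hwv 1).symm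
    -- TFFF
    · exact p3p2_free h1 b0 a01 a23 b1 b2 b3 g02 g03 g12 g13
        (hwv 1) (hwv 2) (hwv 3) vne02 vne03 vne12 vne13
    -- FTTT
    · exact house_free h2 ua2 b2.symm b1 ua1.symm ua0.symm a01 hnuw g21 g02
        (fun h => b0 h.symm) hwnu.symm vne12.symm vne02 (hwv 0).symm
    -- FTTF
    · exact house_free h2 ua2 b2.symm b1 ua1.symm ua0.symm a01 hnuw g21 g02
        (fun h => b0 h.symm) hwnu.symm vne12.symm vne02 (hwv 0).symm
    -- FTFT
    · exact house_free h2 ua3 b3.symm b1 ua1.symm ua0.symm a01 hnuw g31 g03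
        (fun h => b0 h.symm) hwnu.symm vne13.symm vne03 (hwv 0).symm
    -- FTFF
    · exact p3p2_free h1 b1 a10 a23 b0 b2 b3 g12 g13 g02 g03
        (hwv 0) (hwv 2) (hwv 3) vne12 vne13 vne02 vne03
    -- FFTT : w ∈ N34, contradicts hNy
    · exact hNy w (mem23 w hwv b0 b1 b2 b3) hw
    -- FFTF
    · exact p3p2_free h1 b2 a23 a01 b3 b0 b1 g20 g21 g30 g31
        (hwv 3) (hwv 0) (hwv 1) vne02.symm vne12.symm vne03.symm vne13.symm
    -- FFFT
    · exact p3p2_free h1 b3 a32 a01 b2 b0 b1 g30 g31 g20 g21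
        (hwv 2) (hwv 0) (hwv 1) vne03.symm vne13.symm vne02.symm vne12.symm
    -- FFFF : w ∈ A, contradicts hAx
    · exact hAx w (memA w hwv b0 b1 b2 b3) hw.symm
  obtain ⟨y, hyS, hxy⟩ := hyE
  have hyv : ∀ i, y ≠ v i := hyS.1
  have ya2 : G.Adj y (v 2) := (hyS.2 2).mpr (by decide)
  have ya3 : G.Adj y (v 3) := (hyS.2 3).mpr (by decide)
  have yn0 : ¬ G.Adj y (v 0) := fun h => absurd ((hyS.2 0).mp h) (by decide)
  have yn1 : ¬ G.Adj y (v 1) := fun h => absurd ((hyS.2 1).mp h) (by decide)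
  -- y is not adjacent to u : house (u, v0, x, y, v2)
  have hyu : ¬ G.Adj y u := by
    intro h
    exact house_free h2 ua0 xa0.symm hxy h (ua2.symm) (ya2.symm)
      (fun hh => hxu hh.symm) (fun hh => yn0 hh.symm) g20 (fun hh => xn2 hh.symm)
      xneu.symm (hyv 0).symm vne02.symm (hxv 2).symm
  have uney : u ≠ y := fun h => yn0 (by rw [← h]; exact ua0)
  -- A is anticomplete to y
  have hAy : ∀ z ∈ NS G v ∅, ¬ G.Adj z y := by
    intro z hz h
    exact p3p2_free h1 h ya2 a01 (Aadj z hz 2) (Aadj z hz 0) (Aadj z hz 1)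
      yn0 yn1 g20 g21 (hz.1 2) (hz.1 0) (hz.1 1) (hyv 0) (hyv 1)
      vne02.symm vne12.symm
  -- A is independent
  have hind : ∀ c ∈ NS G v ∅, ∀ d ∈ NS G v ∅, ¬ G.Adj c d := by
    intro c hc d hd h
    exact p3p2_free h1 hxy ya2 h xn2 (fun hh => hAx c hc hh.symm)
      (fun hh => hAx d hd hh.symm) (fun hh => hAy c hc hh.symm)
      (fun hh => hAy d hd hh.symm) (fun hh => Aadj c hc 2 hh.symm)
      (fun hh => Aadj d hd 2 hh.symm)
      (hxv 2) (fun hh => Aadj c hc 0 (by rw [← hh]; exact xa0))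
      (fun hh => Aadj d hd 0 (by rw [← hh]; exact xa0))
      (fun hh => Aadj c hc 2 (by rw [← hh]; exact ya2))
      (fun hh => Aadj d hd 2 (by rw [← hh]; exact ya2))
      (hc.1 2).symm (hd.1 2).symm
  -- every neighbour of a vertex of A is adjacent to all of v0..v3
  have hAnbr : ∀ c ∈ NS G v ∅, ∀ t, G.Adj c t →
      (G.Adj t (v 0) ∧ G.Adj t (v 1) ∧ G.Adj t (v 2) ∧ G.Adj t (v 3)) := by
    intro c hc t ht
    have htv : ∀ i, t ≠ v i := fun i h => Aadj c hc i (by rw [← h]; exact ht)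
    by_cases b0 : G.Adj t (v 0) <;> by_cases b1 : G.Adj t (v 1) <;>
      by_cases b2 : G.Adj t (v 2) <;> by_cases b3 : G.Adj t (v 3)
    -- TTTT
    · exact ⟨b0, b1, b2, b3⟩
    -- TTTF : N123
    · exfalso
      have htu : G.Adj t u := by
        by_contra htu'
        exact house_free h2 ua0 b0.symm b2 ua2.symm ua3.symm a32
          (fun h => htu' h.symm) g02 g30 (fun h => b3 h.symm)
          (fun h => b3 (by rw [← h]; exact ua3)) vne02 vne03.symm (htv 3).symm
      by_cases hty : G.Adj t y
      · exact house_free h2 ua3 ya3.symm hty.symm htu (hAu c hc) ht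
          (fun h => hyu h.symm) (fun h => b3 h.symm) (Aadj c hc 3) (hAy c hc)
          uney (htv 3).symm (hc.1 3) (fun h => Aadj c hc 2 (by rw [h]; exact ya2))
      by_cases htx : G.Adj t x
      · exact house_free h2 b2.symm htx hxy ya2 a32 ya3.symm
          (fun h => xn2 h.symm) hty (fun h => b3 h.symm) (fun h => xn3 h.symm)
          (hxv 2).symm (fun h => yn0 (by rw [← h]; exact b0)) (htv 3).symm (hxv 3).symm
      · exact p3p2_free h1 hxy ya3 ht xn3 (fun h => hAx c hc h.symm)
          (fun h => htx h.symm) (fun h => hAy c hc h.symm) (fun h => hty h.symm)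
          (fun h => Aadj c hc 3 h.symm) (fun h => b3 h.symm)
          (hxv 3) (fun h => Aadj c hc 0 (by rw [← h]; exact xa0))
          (fun h => xn2 (by rw [h]; exact b2))
          (fun h => Aadj c hc 2 (by rw [← h]; exact ya2))
          (fun h => yn0 (by rw [h]; exact b0))
          (hc.1 3).symm (htv 3).symm
    -- TTFT : N124
    · exfalso
      have htu : G.Adj t u := by
        by_contra htu'
        exact house_free h2 ua0 b0.symm b3 ua3.symm ua2.symm a23
          (fun h => htu' h.symm) g03 g20 (fun h => b2 h.symm)
          (fun h => b2 (by rw [← h]; exact ua2)) vne03 vne02.symm (htv 2).symm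
      by_cases hty : G.Adj t y
      · exact house_free h2 ua2 ya2.symm hty.symm htu (hAu c hc) ht
          (fun h => hyu h.symm) (fun h => b2 h.symm) (Aadj c hc 2) (hAy c hc)
          uney (htv 2).symm (hc.1 2) (fun h => Aadj c hc 2 (by rw [h]; exact ya2))
      by_cases htx : G.Adj t x
      · exact house_free h2 b3.symm htx hxy ya3 a23 ya2.symm
          (fun h => xn3 h.symm) hty (fun h => b2 h.symm) (fun h => xn2 h.symm)
          (hxv 3).symm (fun h => yn0 (by rw [← h]; exact b0)) (htv 2).symm (hxv 2).symm
      · exact p3p2_free h1 hxy ya2 ht xn2 (fun h => hAx c hc h.symm)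
          (fun h => htx h.symm) (fun h => hAy c hc h.symm) (fun h => hty h.symm)
          (fun h => Aadj c hc 2 h.symm) (fun h => b2 h.symm)
          (hxv 2) (fun h => Aadj c hc 0 (by rw [← h]; exact xa0))
          (fun h => xn3 (by rw [h]; exact b3))
          (fun h => Aadj c hc 2 (by rw [← h]; exact ya2))
          (fun h => yn0 (by rw [h]; exact b0))
          (hc.1 2).symm (htv 2).symm
    -- TTFF : N12-pattern
    · exact absurd (p3p2_free h1 ht b0 a23 (Aadj c hc 0) (Aadj c hc 2) (Aadj c hc 3)
        b2 b3 g02 g03 (hc.1 0) (hc.1 2) (hc.1 3) (htv 2) (htv 3) vne02 vne03) id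
    -- TFTT : N134
    · exfalso
      have htu : G.Adj t u := by
        by_contra htu'
        exact house_free h2 ua2 b2.symm b0 ua0.symm ua1.symm a10
          (fun h => htu' h.symm) g20 g12 (fun h => b1 h.symm)
          (fun h => b1 (by rw [← h]; exact ua1)) vne02.symm vne12 (htv 1).symm
      by_cases htx : G.Adj t x
      · exact house_free h2 ua1 xa1.symm htx.symm htu (hAu c hc) ht
          (fun h => hxu h.symm) (fun h => b1 h.symm) (Aadj c hc 1) (hAx c hc)
          xneu.symm (htv 1).symm (hc.1 1) (fun h => Aadj c hc 0 (by rw [h]; exact xa0))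
      by_cases hty : G.Adj t y
      · exact house_free h2 b0 xa0.symm hxy hty.symm b3.symm ya3.symm
          htx (fun h => yn0 h.symm) g30 (fun h => xn3 h.symm)
          (fun h => xn2 (by rw [← h]; exact b2)) (hyv 0).symm vne03.symm (hxv 3).symm
      · exact p3p2_free h1 xa1.symm hxy ht (fun h => yn1 h.symm)
          (fun h => Aadj c hc 1 h.symm) (fun h => b1 h.symm)
          (fun h => hAx c hc h.symm) (fun h => htx h.symm)
          (fun h => hAy c hc h.symm) (fun h => hty h.symm)
          (hyv 1).symm (hc.1 1).symm (htv 1).symm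
          (fun h => Aadj c hc 0 (by rw [← h]; exact xa0))
          (fun h => xn2 (by rw [h]; exact b2))
          (fun h => Aadj c hc 2 (by rw [← h]; exact ya2))
          (fun h => yn0 (by rw [h]; exact b0))
    -- TFTF : {0,2}
    · exfalso
      have htu : G.Adj t u := by
        by_contra htu'
        exact house_free h2 ua2 b2.symm b0 ua0.symm ua1.symm a10
          (fun h => htu' h.symm) g20 g12 (fun h => b1 h.symm)
          (fun h => b1 (by rw [← h]; exact ua1)) vne02.symm vne12 (htv 1).symm
      have hty : G.Adj t y := by
        by_contra hty
        exact p3p2_free h1 a10 b0.symm ya3 (fun h => b1 h.symm)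
          (fun h => yn1 h.symm) g13 (fun h => yn0 h.symm) g03 hty b3
          (htv 1).symm (hyv 1).symm vne13 (hyv 0).symm vne03
          (fun h => yn0 (by rw [← h]; exact b0)) (htv 3)
      exact house_free h2 ua3 ya3.symm hty.symm htu (hAu c hc) ht
        (fun h => hyu h.symm) (fun h => b3 h.symm) (Aadj c hc 3) (hAy c hc)
        uney (htv 3).symm (hc.1 3) (fun h => Aadj c hc 2 (by rw [h]; exact ya2))
    -- TFFT : {0,3}
    · exfalso
      have htu : G.Adj t u := by
        by_contra htu'
        exact house_free h2 ua3 b3.symm b0 ua0.symm ua1.symm a10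
          (fun h => htu' h.symm) g30 g13 (fun h => b1 h.symm)
          (fun h => b1 (by rw [← h]; exact ua1)) vne03.symm vne13 (htv 1).symm
      have hty : G.Adj t y := by
        by_contra hty
        exact p3p2_free h1 a10 b0.symm ya2 (fun h => b1 h.symm)
          (fun h => yn1 h.symm) g12 (fun h => yn0 h.symm) g02 hty b2
          (htv 1).symm (hyv 1).symm vne12 (hyv 0).symm vne02
          (fun h => yn0 (by rw [← h]; exact b0)) (htv 2)
      exact house_free h2 ua2 ya2.symm hty.symm htu (hAu c hc) ht
        (fun h => hyu h.symm) (fun h => b2 h.symm) (Aadj c hc 2) (hAy c hc)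
        uney (htv 2).symm (hc.1 2) (fun h => Aadj c hc 2 (by rw [h]; exact ya2))
    -- TFFF : singleton 0
    · exact absurd (p3p2_free h1 b0 a01 a23 b1 b2 b3 g02 g03 g12 g13
        (htv 1) (htv 2) (htv 3) vne02 vne03 vne12 vne13) id
    -- FTTT : N234
    · exfalso
      have htu : G.Adj t u := by
        by_contra htu'
        exact house_free h2 ua2 b2.symm b1 ua1.symm ua0.symm a01
          (fun h => htu' h.symm) g21 g02 (fun h => b0 h.symm)
          (fun h => b0 (by rw [← h]; exact ua0)) vne12.symm vne02 (htv 0).symm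
      by_cases htx : G.Adj t x
      · exact house_free h2 ua0 xa0.symm htx.symm htu (hAu c hc) ht
          (fun h => hxu h.symm) (fun h => b0 h.symm) (Aadj c hc 0) (hAx c hc)
          xneu.symm (htv 0).symm (hc.1 0) (fun h => Aadj c hc 0 (by rw [h]; exact xa0))
      by_cases hty : G.Adj t y
      · exact house_free h2 b1 xa1.symm hxy hty.symm b3.symm ya3.symm
          htx (fun h => yn1 h.symm) g31 (fun h => xn3 h.symm)
          (fun h => xn2 (by rw [← h]; exact b2)) (hyv 1).symm vne13.symm (hxv 3).symm
      · exact p3p2_free h1 xa0.symm hxy ht (fun h => yn0 h.symm)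
          (fun h => Aadj c hc 0 h.symm) (fun h => b0 h.symm)
          (fun h => hAx c hc h.symm) (fun h => htx h.symm)
          (fun h => hAy c hc h.symm) (fun h => hty h.symm)
          (hyv 0).symm (hc.1 0).symm (htv 0).symm
          (fun h => Aadj c hc 0 (by rw [← h]; exact xa0))
          (fun h => xn2 (by rw [h]; exact b2))
          (fun h => Aadj c hc 2 (by rw [← h]; exact ya2))
          (fun h => yn1 (by rw [h]; exact b1))
    -- FTTF : {1,2}
    · exfalso
      have htu : G.Adj t u := by
        by_contra htu'
        exact house_free h2 ua2 b2.symm b1 ua1.symm ua0.symm a01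
          (fun h => htu' h.symm) g21 g02 (fun h => b0 h.symm)
          (fun h => b0 (by rw [← h]; exact ua0)) vne12.symm vne02 (htv 0).symm
      have hty : G.Adj t y := by
        by_contra hty
        exact p3p2_free h1 a01 b1.symm ya3 (fun h => b0 h.symm)
          (fun h => yn0 h.symm) g03 (fun h => yn1 h.symm) g13 hty b3
          (htv 0).symm (hyv 0).symm vne03 (hyv 1).symm vne13
          (fun h => yn1 (by rw [← h]; exact b1)) (htv 3)
      exact house_free h2 ua3 ya3.symm hty.symm htu (hAu c hc) ht
        (fun h => hyu h.symm) (fun h => b3 h.symm) (Aadj c hc 3) (hAy c hc)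
        uney (htv 3).symm (hc.1 3) (fun h => Aadj c hc 2 (by rw [h]; exact ya2))
    -- FTFT : {1,3}
    · exfalso
      have htu : G.Adj t u := by
        by_contra htu'
        exact house_free h2 ua3 b3.symm b1 ua1.symm ua0.symm a01
          (fun h => htu' h.symm) g31 g03 (fun h => b0 h.symm)
          (fun h => b0 (by rw [← h]; exact ua0)) vne13.symm vne03 (htv 0).symm
      have hty : G.Adj t y := by
        by_contra hty
        exact p3p2_free h1 a01 b1.symm ya2 (fun h => b0 h.symm)
          (fun h => yn0 h.symm) g02 (fun h => yn1 h.symm) g12 hty b2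
          (htv 0).symm (hyv 0).symm vne02 (hyv 1).symm vne12
          (fun h => yn1 (by rw [← h]; exact b1)) (htv 2)
      exact house_free h2 ua2 ya2.symm hty.symm htu (hAu c hc) ht
        (fun h => hyu h.symm) (fun h => b2 h.symm) (Aadj c hc 2) (hAy c hc)
        uney (htv 2).symm (hc.1 2) (fun h => Aadj c hc 2 (by rw [h]; exact ya2))
    -- FTFF : singleton 1
    · exact absurd (p3p2_free h1 b1 a10 a23 b0 b2 b3 g12 g13 g02 g03
        (htv 0) (htv 2) (htv 3) vne12 vne13 vne02 vne03) id
    -- FFTT : N34-pattern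
    · exact absurd (p3p2_free h1 ht b2 a01 (Aadj c hc 2) (Aadj c hc 0) (Aadj c hc 1)
        b0 b1 g20 g21 (hc.1 2) (hc.1 0) (hc.1 1) (htv 0) (htv 1)
        vne02.symm vne12.symm) id
    -- FFTF : singleton 2
    · exact absurd (p3p2_free h1 b2 a23 a01 b3 b0 b1 g20 g21 g30 g31
        (htv 3) (htv 0) (htv 1) vne02.symm vne12.symm vne03.symm vne13.symm) id
    -- FFFT : singleton 3
    · exact absurd (p3p2_free h1 b3 a32 a01 b2 b0 b1 g30 g31 g20 g21
        (htv 2) (htv 0) (htv 1) vne03.symm vne13.symm vne02.symm vne12.symm) id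
    -- FFFF : t ∈ A, contradicts independence of A
    · exact absurd ht (hind c hc t (memA t htv b0 b1 b2 b3))
  -- A is complete to M
  have hAM : ∀ c ∈ NS G v ∅, ∀ w ∈ NS G v {0,1,2,3}, G.Adj c w := by
    intro c hc w hw
    by_contra hcw
    refine no_dominated G hmin hG (a := c) (z := w)
      (fun h => Aadj c hc 0 (by rw [h]; exact (hw.2 0).mpr (by decide))) ?_
    intro z hz
    obtain ⟨z0, z1, z2, z3⟩ := hAnbr c hc z hz
    have hzv : ∀ i, z ≠ v i := fun i h => Aadj c hc i (by rw [← h]; exact hz)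
    have hzw : z ≠ w := fun h => hcw (by rw [← h]; exact hz)
    exact (hcl (memM z hzv z0 z1 z2 z3) hw hzw).symm
  -- A is a singleton
  have huniq : ∀ b ∈ NS G v ∅, b = a0 := by
    intro b hb
    by_contra hbne
    refine no_dominated G hmin hG (a := b) (z := a0) hbne ?_
    intro z hz
    obtain ⟨z0, z1, z2, z3⟩ := hAnbr b hb z hz
    have hzv : ∀ i, z ≠ v i := fun i h => Aadj b hb i (by rw [← h]; exact hz)
    exact hAM a0 ha0 z (memM z hzv z0 z1 z2 z3)
  refine ⟨⟨y, hyS, hxy, fun hall => hyu (hall u hu)⟩, ?_⟩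
  have hsing : NS G v ∅ = {a0} := Set.eq_singleton_iff_unique_mem.mpr ⟨ha0, huniq⟩
  rw [hsing, Set.ncard_singleton]
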